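/- (Non-local box correction lemma) Let a, b, λ₀, λ₁ ∈ ℝ³ with b·λ₀ ≠ 0 and b·λ₁ ≠ 0. Define bits x, y ∈ {0, 1} by x = 0 if |a·λ₁| ≤ |a·λ₀| and x = 1 otherwise, and y = 0 if sgn(b·λ₀) = sgn(b·λ₁) and y = 1 otherwise; set λ_x = λ₀ if x = 0 and λ_x = λ₁ if x = 1. Then for any bits α, β ∈ {0, 1} satisfying α ⊕ β = x ∧ y (the non-local box condition), one has sgn(b·((-1)^β λ₀)) = sgn(b·((-1)^α λ_x)). In particular Bob's output sgn(b·λ_B) with λ_B = (-1)^β λ₀ equals sgn(b·λ_s) with λ_s = (-1)^α λ_x. -/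
import Mathlib


open scoped RealInnerProductSpace

/-- `sgn(x) = 1` if `x ≥ 0`, `-1` if `x < 0`. -/
noncomputable def sgn (x : ℝ) : ℝ := if 0 ≤ x then 1 else -1

/-- **Non-local box correction lemma.** Let `b·λ₀ ≠ 0` and `b·λ₁ ≠ 0`. With Alice's
box input `x = 0` iff `|a·λ₁| ≤ |a·λ₀|`, Bob's box input `y = 0` iff
`sgn(b·λ₀) = sgn(b·λ₁)`, and `λ_x = λ₀` if `x = 0`, `λ_x = λ₁` if `x = 1`:
for any box outputs `α, β` with `α ⊕ β = x ∧ y`, Bob's value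
`sgn(b·((-1)^β λ₀))` equals `sgn(b·((-1)^α λ_x))`. -/

lemma sgn_neg' (t : ℝ) (ht : t ≠ 0) : sgn (-t) = - sgn t := by
  unfold sgn
  rcases lt_or_gt_of_ne ht with h | h
  · simp [le_of_lt (neg_pos.mpr h), not_le.mpr h]
  · simp [not_le.mpr (neg_neg_iff_pos.mpr h), le_of_lt h]

lemma sgn_ne (s t : ℝ) (h : sgn s ≠ sgn t) : sgn s = - sgn t := by
  unfold sgn at *
  split_ifs at * <;> simp_all

theorem nonlocal_box_correction (a b lam₀ lam₁ : EuclideanSpace ℝ (Fin 3))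
    (hb₀ : ⟪b, lam₀⟫ ≠ 0) (hb₁ : ⟪b, lam₁⟫ ≠ 0)
    (x y : Bool)
    (hx : x = if |⟪a, lam₁⟫| ≤ |⟪a, lam₀⟫| then false else true)
    (hy : y = if sgn ⟪b, lam₀⟫ = sgn ⟪b, lam₁⟫ then false else true)
    (α β : Bool) (hbox : xor α β = (x && y)) :
    sgn ⟪b, ((-1 : ℝ) ^ β.toNat) • lam₀⟫
      = sgn ⟪b, ((-1 : ℝ) ^ α.toNat) • (if x then lam₁ else lam₀)⟫ := by
  have key : ∀ t : Bool, ((-1:ℝ) ^ t.toNat) = if t then -1 else 1 := by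
    intro t; cases t <;> simp
  rcases x with _|_
  · simp only [Bool.false_and] at hbox
    have : α = β := by revert hbox; cases α <;> cases β <;> simp
    subst this; simp
  · simp only [Bool.true_and] at hbox
    simp only [if_true]
    by_cases hsg : sgn ⟪b, lam₀⟫ = sgn ⟪b, lam₁⟫
    · rw [if_pos hsg] at hy; rw [hy] at hbox
      have : α = β := by revert hbox; cases α <;> cases β <;> simp
      subst this
      cases α <;>
        simp only [Bool.toNat_false, Bool.toNat_true, pow_zero, pow_one, one_smul,
          neg_one_smul, inner_neg_right, sgn_neg' _ hb₀, sgn_neg' _ hb₁, hsg]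
    · rw [if_neg hsg] at hy; rw [hy] at hbox
      have : α = !β := by revert hbox; cases α <;> cases β <;> simp
      subst this
      have h2 := sgn_ne _ _ hsg
      cases β <;>
        simp only [Bool.toNat_false, Bool.toNat_true, Bool.not_false, Bool.not_true,
          pow_zero, pow_one, one_smul, neg_one_smul, inner_neg_right,
          sgn_neg' _ hb₀, sgn_neg' _ hb₁, h2, neg_neg]
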